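/- Let E be an elementary topos with all small colimits such that: colimits in E are stable under pullback, every object of E is a colimit of a small diagram of subterminal objects, and every subterminal object of E is complemented (i.e. for every subterminal A there is a subterminal A' with 1 ≅ A ⨿ A'). Let F be an elementary topos with small colimits, and let f_! ⊣ f^* ⊣ f_* be an adjoint triple with f^* : E ⥤ F preserving finite limits and small colimits. Then f^* is cartesian closed; equivalently, for every object X of F and every object A of E, the Frobenius map f_!(X ⨯ f^*(A)) ⟶ f_!(X) ⨯ A — whose first component is f_! applied to the first projection and whose second component is f_! applied to the second projection followed by the counit f_!(f^*(A)) ⟶ A — is an isomorphism. -/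

import Mathlib

open CategoryTheory CategoryTheory.Limits

/-- A subobject classifier for a category `C` with a terminal object:
an object `Ω` together with a "truth" arrow `⊤_ C ⟶ Ω` such that every
monomorphism arises as the pullback of `truth` along a unique classifying map. -/
structure Classifier (C : Type*) [Category C] [HasTerminal C] where
  Ω : C
  truth : ⊤_ C ⟶ Ω
  χ : ∀ {U A : C} (m : U ⟶ A) [Mono m], A ⟶ Ω
  isPullback : ∀ {U A : C} (m : U ⟶ A) [Mono m],
    IsPullback m (terminal.from U) (χ m) truth
  uniq : ∀ {U A : C} (m : U ⟶ A) [Mono m] (χ' : A ⟶ Ω),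
    IsPullback m (terminal.from U) χ' truth → χ' = χ m

/-- `C` has a subobject classifier. -/
class HasClassifier (C : Type*) [Category C] [HasTerminal C] : Prop where
  nonempty : Nonempty (_root_.Classifier C)

/-- Given an adjunction `fShriek ⊣ fStar` (thought of as `f_! ⊣ f^*` for an essential
geometric morphism `f`), a morphism `a : A ⟶ B` in the codomain, an object `X` of the
domain and a morphism `x : X ⟶ f^* B`, this is the comparison map
`θ : f_!(X ×_{f^* B} f^* A) ⟶ f_!(X) ×_B A`, whose first component is `f_!` of the first
pullback projection, and whose second component is `f_!` of the second pullback projection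
followed by the counit `f_!(f^* A) ⟶ A`.  Here `f_!(X) ⟶ B` is the adjunct of `x`.
The geometric morphism `f` is locally connected precisely if all these maps are
isomorphisms. -/
noncomputable def thetaMap {F : Type*} {E : Type*} [Category F] [Category E]
    [HasPullbacks E] [HasPullbacks F]
    (fShriek : F ⥤ E) (fStar : E ⥤ F) (adj : fShriek ⊣ fStar)
    {A B : E} (a : A ⟶ B) (X : F) (x : X ⟶ fStar.obj B) :
    fShriek.obj (pullback x (fStar.map a)) ⟶ pullback ((adj.homEquiv X B).symm x) a :=
  pullback.lift (fShriek.map (pullback.fst x (fStar.map a)))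
    (fShriek.map (pullback.snd x (fStar.map a)) ≫ adj.counit.app A)
    (by
      have h := adj.counit.naturality a
      simp only [Functor.comp_map, Functor.id_map] at h
      rw [Adjunction.homEquiv_counit, ← Functor.map_comp_assoc, pullback.condition,
        Functor.map_comp_assoc, Category.assoc, ← h])

universe v u₁ u₂

open MonoidalCategory

section Aux

universe w w₁ w₂ v₁ v₂ x₁ x₂

/-- Transfer of isomorphy of a natural transformation along a colimit. -/
lemma aux_isIso_app {C : Type u₁} {D : Type u₂} {J : Type w} [Category.{v₁} C]
    [Category.{v₂} D] [Category.{w₁} J]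
    {K : J ⥤ C} {c : Cocone K} (hc : IsColimit c)
    {G H : C ⥤ D} (α : G ⟶ H)
    (hG : IsColimit (G.mapCocone c)) (hH : IsColimit (H.mapCocone c))
    (h : ∀ j, IsIso (α.app (K.obj j))) : IsIso (α.app c.pt) := by
  let e : K ⋙ G ≅ K ⋙ H :=
    NatIso.ofComponents (fun j => asIso (α.app (K.obj j))) (fun f => α.naturality _)
  have heq : α.app c.pt = (hG.coconePointsIsoOfNatIso hH e).hom := by
    apply hG.hom_ext
    intro j
    rw [IsColimit.comp_coconePointsIsoOfNatIso_hom]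
    simp only [Functor.mapCocone_ι_app]
    rw [α.naturality]
    simp [e]
    rfl
  rw [heq]
  infer_instance

/-- In a binary cofan which is a colimit, if the second summand is initial then the
first injection is an isomorphism. -/
lemma aux_isIso_inl {C : Type u₁} [Category.{v₁} C] {P Q T : C} {f : P ⟶ T} {g : Q ⟶ T}
    (hc : IsColimit (BinaryCofan.mk f g)) (hQ : IsInitial Q) : IsIso f := by
  refine ⟨hc.desc (BinaryCofan.mk (𝟙 P) (hQ.to P)), ?_, ?_⟩
  · have := hc.fac (BinaryCofan.mk (𝟙 P) (hQ.to P)) ⟨WalkingPair.left⟩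
    simp at this
    exact this
  · apply BinaryCofan.IsColimit.hom_ext hc
    · have := hc.fac (BinaryCofan.mk (𝟙 P) (hQ.to P)) ⟨WalkingPair.left⟩
      simp only [BinaryCofan.mk_pt, BinaryCofan.ι_app_left, BinaryCofan.mk_inl] at this ⊢
      erw [← Category.assoc, this]
      exact (Category.id_comp f).trans (Category.comp_id f).symm
    · apply hQ.hom_ext

/-- Pullback stability of binary coproduct decompositions, from preservation of colimits
by the base change functor. -/
lemma aux_pullback_cofan {C : Type u₁} [Category.{v₁} C] [HasPullbacks C] [HasColimits C]
    {W W' T V : C} (u : W ⟶ T) (u' : W' ⟶ T) (m : V ⟶ T)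
    (hc : IsColimit (BinaryCofan.mk u u'))
    [PreservesColimits (Over.pullback m)] :
    Nonempty (IsColimit (BinaryCofan.mk (pullback.snd u m) (pullback.snd u' m))) := by
  let i₁ : Over.mk u ⟶ Over.mk (𝟙 T) := Over.homMk u
  let i₂ : Over.mk u' ⟶ Over.mk (𝟙 T) := Over.homMk u'
  have l : IsColimit (BinaryCofan.mk ((Over.forget T).map i₁) ((Over.forget T).map i₂)) := hc
  have hOver : IsColimit (BinaryCofan.mk i₁ i₂) :=
    isColimitOfReflectsOfMapIsColimit (Over.forget T) i₁ i₂ l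
  have hp := isColimitOfPreserves (Over.pullback m) hOver
  have e1 : IsColimit (BinaryCofan.mk ((Over.pullback m).map i₁) ((Over.pullback m).map i₂)) :=
    isColimitMapCoconeBinaryCofanEquiv (Over.pullback m) i₁ i₂ hp
  have e2 := mapIsColimitOfPreservesOfIsColimit (Over.forget V) _ _ e1
  refine ⟨IsColimit.ofIsoColimit e2 (Cocones.ext (@asIso _ _ _ _ (pullback.snd (𝟙 T) m)
    (pullback_snd_iso_of_left_iso (𝟙 T) m)) ?_)⟩
  rintro ⟨⟨⟩⟩ <;>
    · show pullback.lift _ _ _ ≫ pullback.snd (𝟙 T) m = pullback.snd _ m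
      exact pullback.lift_snd _ _ _

/-- The key lemma: a morphism of binary coproduct decompositions over an isomorphism of
cocone points, whose summands are "disjoint", is an isomorphism on the first summand. -/
lemma aux_key {C : Type u₁} [Category.{v₁} C] [HasPullbacks C] [HasColimits C]
    {W W' Z Z' T T' : C} {u : W ⟶ T'} {u' : W' ⟶ T'} {n : Z ⟶ T}
    (φ : W ⟶ Z) (φ' : W' ⟶ Z') (t : T' ⟶ T) [IsIso t] [Mono n]
    (hc' : IsColimit (BinaryCofan.mk u u'))
    (sq : φ ≫ n = u ≫ t)
    (hdisj : ∀ (P : C) (_ : P ⟶ Z) (_ : P ⟶ Z'), Nonempty (IsInitial P))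
    [PreservesColimits (Over.pullback (n ≫ inv t))] :
    IsIso φ := by
  set m : Z ⟶ T' := n ≫ inv t with hm
  have hmono : Mono m := mono_comp _ _
  obtain ⟨hq⟩ := aux_pullback_cofan u u' m hc'
  obtain ⟨hinit⟩ := hdisj (pullback u' m) (pullback.snd u' m) (pullback.fst u' m ≫ φ')
  have hsnd : IsIso (pullback.snd u m) := aux_isIso_inl hq hinit
  have hφm : φ ≫ m = u := by
    rw [hm, ← Category.assoc, sq, Category.assoc, IsIso.hom_inv_id, Category.comp_id]
  let k : W ⟶ pullback u m := pullback.lift (𝟙 W) φ (by rw [Category.id_comp, hφm])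
  have hk1 : k ≫ pullback.fst u m = 𝟙 W := pullback.lift_fst _ _ _
  have hfmono : Mono (pullback.fst u m) := inferInstance
  have hk2 : pullback.fst u m ≫ k = 𝟙 _ := by
    rw [← cancel_mono (pullback.fst u m), Category.assoc, hk1]
    simp
  have hkiso : IsIso k := ⟨pullback.fst u m, hk1, hk2⟩
  have : φ = k ≫ pullback.snd u m := (pullback.lift_snd _ _ _).symm
  rw [this]
  infer_instance

/-- Disjointness of a complemented pair of subterminal objects: anything mapping to both
pieces is initial. -/
lemma aux_disjoint {C : Type u₁} [Category.{v₁} C] [HasFiniteLimits C] [HasFiniteColimits C]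
    [CartesianMonoidalCategory C] [MonoidalClosed C] (cls : _root_.Classifier C)
    {A A' : C} [Mono (terminal.from A)] [Mono (terminal.from A')]
    (hc : IsColimit (BinaryCofan.mk (terminal.from A) (terminal.from A')))
    {P : C} (p : P ⟶ A) (p' : P ⟶ A') : Nonempty (IsInitial P) := by
  let fls : ⊤_ C ⟶ cls.Ω := cls.χ (initial.to (⊤_ C))
  let σ : ⊤_ C ⟶ cls.Ω :=
    hc.desc (BinaryCofan.mk (terminal.from A ≫ cls.truth) (terminal.from A' ≫ fls))
  have h1 : terminal.from A ≫ σ = terminal.from A ≫ cls.truth := by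
    have := hc.fac (BinaryCofan.mk (terminal.from A ≫ cls.truth) (terminal.from A' ≫ fls))
      ⟨WalkingPair.left⟩
    simp at this
    exact this
  have h2 : terminal.from A' ≫ σ = terminal.from A' ≫ fls := by
    have := hc.fac (BinaryCofan.mk (terminal.from A ≫ cls.truth) (terminal.from A' ≫ fls))
      ⟨WalkingPair.right⟩
    simp at this
    exact this
  have e1 : terminal.from P = p ≫ terminal.from A := Subsingleton.elim _ _
  have e2 : terminal.from P = p' ≫ terminal.from A' := Subsingleton.elim _ _
  have key : terminal.from P ≫ fls = terminal.from P ≫ cls.truth := by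
    calc terminal.from P ≫ fls = p' ≫ terminal.from A' ≫ fls := by rw [e2, Category.assoc]
    _ = p' ≫ terminal.from A' ≫ σ := by rw [h2]
    _ = terminal.from P ≫ σ := by rw [e2, Category.assoc]
    _ = p ≫ terminal.from A ≫ σ := by rw [e1, Category.assoc]
    _ = p ≫ terminal.from A ≫ cls.truth := by rw [h1]
    _ = terminal.from P ≫ cls.truth := by rw [e1, Category.assoc]
  have hpb := cls.isPullback (initial.to (⊤_ C))
  let ℓ : P ⟶ ⊥_ C := hpb.lift (terminal.from P) (terminal.from P) key
  have : IsIso ℓ := inferInstance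
  exact ⟨IsInitial.ofIso initialIsInitial (asIso ℓ).symm⟩

open CartesianMonoidalCategory in
/-- whiskering preserves monos in a cartesian monoidal category -/
lemma aux_whiskerLeft_mono {C : Type u₁} [Category.{v₁} C] [CartesianMonoidalCategory C]
    (X : C) {A B : C} (f : A ⟶ B) [Mono f] : Mono (X ◁ f) := by
  constructor
  intro Z a b h
  apply CartesianMonoidalCategory.hom_ext
  · simpa using congrArg (· ≫ fst X B) h
  · have := congrArg (· ≫ snd X B) h
    simp only [Category.assoc, whiskerLeft_snd] at this
    rw [← Category.assoc, ← Category.assoc] at this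
    exact (cancel_mono f).mp this

open CartesianMonoidalCategory in
lemma aux_fst_iso {C : Type u₁} [Category.{v₁} C] [CartesianMonoidalCategory C]
    {X T : C} (hT : IsTerminal T) : IsIso (fst X T) := by
  refine ⟨CartesianMonoidalCategory.lift (𝟙 X) (hT.from X), ?_, by simp⟩
  apply CartesianMonoidalCategory.hom_ext
  · simp
  · apply hT.hom_ext

open CartesianMonoidalCategory in
/-- the comparison between the chosen product (tensor) and the limits API product. -/
noncomputable def aux_prodTensor {C : Type u₁} [Category.{v₁} C] [CartesianMonoidalCategory C]
    (X Y : C) : (X ⨯ Y : C) ≅ X ⊗ Y where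
  hom := CartesianMonoidalCategory.lift prod.fst prod.snd
  inv := prod.lift (fst X Y) (snd X Y)
  hom_inv_id := by apply Limits.prod.hom_ext <;> simp
  inv_hom_id := by
    apply CartesianMonoidalCategory.hom_ext
    · simp; exact prod.lift_fst _ _
    · simp; exact prod.lift_snd _ _

section AuxFrob

open CartesianMonoidalCategory in
/-- The Frobenius comparison transformation `f_!(X ⊗ f^* -) ⟶ f_! X ⊗ -`. -/
noncomputable def auxFrob {F : Type x₁} {E : Type x₂} [Category.{w₁} F] [Category.{w₂} E]
    [CartesianMonoidalCategory E] [CartesianMonoidalCategory F]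
    (fShriek : F ⥤ E) (fStar : E ⥤ F) (adj₁ : fShriek ⊣ fStar) (X : F) :
    (fStar ⋙ tensorLeft X ⋙ fShriek) ⟶ tensorLeft (fShriek.obj X) where
  app A := CartesianMonoidalCategory.lift (fShriek.map (fst X (fStar.obj A)))
    (fShriek.map (snd X (fStar.obj A)) ≫ adj₁.counit.app A)
  naturality {A B} a := by
    dsimp
    apply CartesianMonoidalCategory.hom_ext
    · simp [← Functor.map_comp]
    · simp only [Category.assoc, CartesianMonoidalCategory.lift_snd,
        CartesianMonoidalCategory.whiskerLeft_snd]
      rw [← Functor.map_comp_assoc, CartesianMonoidalCategory.whiskerLeft_snd,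
        Functor.map_comp_assoc, adj₁.counit_naturality, CartesianMonoidalCategory.lift_snd_assoc, Category.assoc]

end AuxFrob

open CartesianMonoidalCategory in
/-- Let `E` be an elementary topos with all small colimits such that
colimits in `E` are stable under pullback (the base-change functors preserve colimits),
every object of `E` is the colimit of a small diagram of subterminal objects, and every
subterminal object of `E` is complemented.  Let `F` be an elementary topos with small
colimits and `f_! ⊣ f^* ⊣ f_*` an adjoint triple, with `f^* : E ⥤ F` preserving finite
limits and small colimits.  Then `f^*` is cartesian closed; equivalently, all Frobenius
maps `f_!(X ⨯ f^* A) ⟶ f_!(X) ⨯ A` are isomorphisms. -/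
theorem cartesianClosed_inverse_image_of_subterminally_generated
    (E : Type u₁) [Category.{v} E] [HasFiniteLimits E] [HasFiniteColimits E]
    [CartesianMonoidalCategory E] [MonoidalClosed E] [_root_.HasClassifier E] [HasColimits E]
    (hUniv : ∀ {A B : E} (g : A ⟶ B), PreservesColimits (Over.pullback g))
    (hGen : ∀ A : E, ∃ (J : Type v) (_ : SmallCategory J) (K : J ⥤ E) (c : Cocone K),
      (∀ j : J, Mono (terminal.from (K.obj j))) ∧ c.pt = A ∧ Nonempty (IsColimit c))
    (hCompl : ∀ A : E, Mono (terminal.from A) →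
      ∃ A' : E, Mono (terminal.from A') ∧
        Nonempty (IsColimit (BinaryCofan.mk (terminal.from A) (terminal.from A'))))
    (F : Type u₂) [Category.{v} F] [HasFiniteLimits F] [HasFiniteColimits F]
    [CartesianMonoidalCategory F] [MonoidalClosed F] [_root_.HasClassifier F] [HasColimits F]
    (fShriek : F ⥤ E) (fStar : E ⥤ F) (fPush : F ⥤ E)
    [PreservesFiniteLimits fStar] [PreservesColimits fStar]
    (adj₁ : fShriek ⊣ fStar) (adj₂ : fStar ⊣ fPush) :
    MonoidalClosedFunctor fStar ∧
      ∀ (X : F) (A : E),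
        IsIso (prod.lift (fShriek.map prod.fst)
          (fShriek.map prod.snd ≫ adj₁.counit.app A) :
            fShriek.obj (X ⨯ fStar.obj A) ⟶ fShriek.obj X ⨯ A) := by
  obtain ⟨cls⟩ := (HasClassifier.nonempty : Nonempty (_root_.Classifier E))
  haveI hpE : ∀ (A : E), PreservesColimits (tensorLeft A) := fun A =>
    (ihom.adjunction A).leftAdjoint_preservesColimits
  haveI hpF : ∀ (X : F), PreservesColimits (tensorLeft X) := fun X =>
    (ihom.adjunction X).leftAdjoint_preservesColimits
  haveI hsh : PreservesColimits fShriek := adj₁.leftAdjoint_preservesColimits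
  set β := auxFrob fShriek fStar adj₁ with hβ
  -- Step 1: the subterminal case
  have key_sub : ∀ (A : E), Mono (terminal.from A) → ∀ (X : F), IsIso ((β X).app A) := by
    intro A hA X
    obtain ⟨A', hA', ⟨hcop⟩⟩ := hCompl A hA
    haveI := hA; haveI := hA'
    -- the cofan in F, mapped to E by `f_!`
    have hcF : IsColimit (BinaryCofan.mk
        ((fStar ⋙ tensorLeft X ⋙ fShriek).map (terminal.from A))
        ((fStar ⋙ tensorLeft X ⋙ fShriek).map (terminal.from A'))) :=
      mapIsColimitOfPreservesOfIsColimit _ _ _ hcop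
    -- the map `t` on cocone points is an isomorphism
    have hterm : IsTerminal (fStar.obj (⊤_ E)) :=
      IsTerminal.isTerminalObj fStar _ terminalIsTerminal
    haveI hfstF : IsIso (fst X (fStar.obj (⊤_ E))) := aux_fst_iso hterm
    haveI hfstE : IsIso (fst (fShriek.obj X) (⊤_ E)) := aux_fst_iso terminalIsTerminal
    have ht : IsIso ((β X).app (⊤_ E)) := by
      have e : (β X).app (⊤_ E) ≫ fst _ _ = fShriek.map (fst X (fStar.obj (⊤_ E))) :=
        CartesianMonoidalCategory.lift_fst _ _
      have e2 : (β X).app (⊤_ E) = fShriek.map (fst X (fStar.obj (⊤_ E))) ≫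
          inv (fst (fShriek.obj X) (⊤_ E)) := by
        rw [← e, Category.assoc, IsIso.hom_inv_id, Category.comp_id]
      rw [e2]
      infer_instance
    haveI := ht
    -- mono of the injection in E
    haveI hn : Mono ((fShriek.obj X) ◁ terminal.from A) :=
      aux_whiskerLeft_mono _ _
    haveI := hUniv (((fShriek.obj X) ◁ terminal.from A) ≫ inv ((β X).app (⊤_ E)))
    refine aux_key (n := (fShriek.obj X) ◁ terminal.from A) ((β X).app A) ((β X).app A')
        ((β X).app (⊤_ E)) hcF ?_ ?_
    · exact ((β X).naturality (terminal.from A)).symm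
    · intro P p p'
      exact aux_disjoint cls hcop (p ≫ snd _ _) (p' ≫ snd _ _)
  -- Step 2: all objects
  have key : ∀ (X : F) (A : E), IsIso ((β X).app A) := by
    intro X A
    obtain ⟨J, hJ, K, c, hsub, hpt, ⟨hc⟩⟩ := hGen A
    subst hpt
    exact aux_isIso_app hc (β X) (isColimitOfPreserves _ hc) (isColimitOfPreserves _ hc)
      (fun j => key_sub _ (hsub j) X)
  -- Part 2 of the statement
  have part2 : ∀ (X : F) (A : E),
      IsIso (prod.lift (fShriek.map prod.fst)
        (fShriek.map prod.snd ≫ adj₁.counit.app A) :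
          fShriek.obj (X ⨯ fStar.obj A) ⟶ fShriek.obj X ⨯ A) := by
    intro X A
    haveI := key X A
    have e : (prod.lift (fShriek.map prod.fst)
        (fShriek.map prod.snd ≫ adj₁.counit.app A) :
          fShriek.obj (X ⨯ fStar.obj A) ⟶ fShriek.obj X ⨯ A) =
        fShriek.map (aux_prodTensor X (fStar.obj A)).hom ≫ (β X).app A ≫
          (aux_prodTensor (fShriek.obj X) A).inv := by
      apply Limits.prod.hom_ext
      · simp [aux_prodTensor, hβ, auxFrob, ← Functor.map_comp_assoc, ← Functor.map_comp]
      · simp [aux_prodTensor, hβ, auxFrob, ← Functor.map_comp_assoc, ← Functor.map_comp]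
    rw [e]
    infer_instance
  -- Part 1: `fStar` is cartesian closed
  have hfrob : ∀ (A : E), IsIso (frobeniusMorphism fStar adj₁ A) := by
    intro A
    suffices h : ∀ (B : F), IsIso ((frobeniusMorphism fStar adj₁ A).natTrans.app B) from
      NatIso.isIso_of_isIso_app _
    intro B
    haveI := key B A
    have hswapF : (CartesianMonoidalCategory.lift (snd (fStar.obj A) B) (fst (fStar.obj A) B) :
        fStar.obj A ⊗ B ⟶ B ⊗ fStar.obj A) ≫
        CartesianMonoidalCategory.lift (snd B (fStar.obj A)) (fst B (fStar.obj A)) = 𝟙 _ := by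
      apply CartesianMonoidalCategory.hom_ext <;> simp
    have e : (frobeniusMorphism fStar adj₁ A).natTrans.app B =
        fShriek.map (CartesianMonoidalCategory.lift (snd (fStar.obj A) B) (fst (fStar.obj A) B)) ≫
          (β B).app A ≫
          CartesianMonoidalCategory.lift (snd (fShriek.obj B) A) (fst (fShriek.obj B) A) := by
      apply CartesianMonoidalCategory.hom_ext
      · simp [frobeniusMorphism, hβ, auxFrob, ← Functor.map_comp_assoc, ← Functor.map_comp]
      · simp [frobeniusMorphism, hβ, auxFrob, ← Functor.map_comp_assoc, ← Functor.map_comp]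
    rw [e]
    haveI : IsIso (fShriek.map (CartesianMonoidalCategory.lift (snd (fStar.obj A) B)
        (fst (fStar.obj A) B))) := by
      have : IsIso (CartesianMonoidalCategory.lift (snd (fStar.obj A) B) (fst (fStar.obj A) B)) :=
        ⟨CartesianMonoidalCategory.lift (snd B (fStar.obj A)) (fst B (fStar.obj A)),
          by apply CartesianMonoidalCategory.hom_ext <;> simp,
          by apply CartesianMonoidalCategory.hom_ext <;> simp⟩
      infer_instance
    haveI : IsIso (CartesianMonoidalCategory.lift (snd (fShriek.obj B) A) (fst (fShriek.obj B) A)) :=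
      ⟨CartesianMonoidalCategory.lift (snd A (fShriek.obj B)) (fst A (fShriek.obj B)),
        by apply CartesianMonoidalCategory.hom_ext <;> simp,
        by apply CartesianMonoidalCategory.hom_ext <;> simp⟩
    infer_instance
  refine ⟨⟨fun A => ?_⟩, part2⟩
  haveI := hfrob A
  exact expComparison_iso_of_frobeniusMorphism_iso fStar adj₁ A
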